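/- Suppose F is L-smooth relative to J_δ and satisfies the generalized PL condition: there exist λ: (0,∞) → (0,∞) and η > 0 with D_{J_δ}^{v_τ⁺}(θ, θ_τ⁺) ≥ λ(τ) D_{J_δ}^{v_1⁺}(θ, θ_1⁺) and D_{J_δ}^{v_1⁺}(θ, θ_1⁺) ≥ η(F(θ) - F*) for all θ ∈ dom(∂J), v ∈ ∂J_δ(θ). Then for any step size 0 < τ < 1/L, one linearized Bregman step satisfies F(θ_τ⁺) - F* ≤ (1 - ηλ(τ)/τ)(F(θ) - F*). -/

import Mathlib

open RealInnerProductSpace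

/-- A convex continuous function on a Euclidean space is bounded below by an affine-type bound. -/
lemma convex_affine_lower {d : ℕ} (J : EuclideanSpace ℝ (Fin d) → ℝ)
    (hconv : ConvexOn ℝ Set.univ J) (hJc : Continuous J) :
    ∃ A C : ℝ, 0 ≤ C ∧ ∀ x, A - C * ‖x‖ ≤ J x := by
  obtain ⟨z, hz, hmin⟩ := (isCompact_closedBall (0 : EuclideanSpace ℝ (Fin d)) 1).exists_isMinOn
    ⟨0, by simp⟩ hJc.continuousOn
  set m := J z with hm
  refine ⟨min (J 0) m, max 0 (J 0 - m), le_max_left _ _, fun x => ?_⟩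
  by_cases hx : ‖x‖ ≤ 1
  · have hxm : m ≤ J x := hmin (by simpa [Metric.mem_closedBall, dist_eq_norm] using hx)
    have h0 : (0:ℝ) ≤ max 0 (J 0 - m) * ‖x‖ :=
      mul_nonneg (le_max_left _ _) (norm_nonneg _)
    have := min_le_right (J 0) m
    linarith
  · push_neg at hx
    have hr : (0:ℝ) < ‖x‖ := by linarith
    set r := ‖x‖ with hrdef
    have ha : (0:ℝ) ≤ 1 - 1/r := by
      have : 1/r ≤ 1 := by rw [div_le_one hr]; linarith
      linarith
    have hb : (0:ℝ) ≤ 1/r := by positivity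
    have hab : (1 - 1/r) + 1/r = 1 := by ring
    have hconvx := hconv.2 (Set.mem_univ (0 : EuclideanSpace ℝ (Fin d))) (Set.mem_univ x)
      ha hb hab
    have hu : (1 - 1/r) • (0 : EuclideanSpace ℝ (Fin d)) + (1/r) • x = (1/r) • x := by simp
    rw [hu] at hconvx
    have hunorm : ‖(1/r) • x‖ = 1 := by
      rw [norm_smul]
      simp [abs_of_pos (by positivity : (0:ℝ) < 1/r), hrdef]
      field_simp
      exact div_self (ne_of_gt hr)
    ring
    have hum : m ≤ J ((1/r) • x) := hmin (show (1/r) • x ∈ Metric.closedBall 0 1 by rw [Metric.mem_closedBall, dist_zero_right, hunorm])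
    -- m ≤ (1 - 1/r) * J 0 + (1/r) * J x
    have hC : J 0 - m ≤ max 0 (J 0 - m) := le_max_right _ _
    have hA : min (J 0) m ≤ J 0 := min_le_left _ _
    have key : r * m ≤ (r - 1) * J 0 + J x := by
      have := mul_le_mul_of_nonneg_left (hum.trans hconvx) hr.le
      have hrne : r ≠ 0 := ne_of_gt hr
      simp only [smul_eq_mul] at this
      field_simp at this
      nlinarith
    nlinarith

/-- Existence of the proximal point for a convex continuous function plus a quadratic. -/
lemma exists_prox {d : ℕ} (J : EuclideanSpace ℝ (Fin d) → ℝ) (δ : ℝ) (hδ : 0 < δ)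
    (hconv : ConvexOn ℝ Set.univ J) (hJc : Continuous J) (w : EuclideanSpace ℝ (Fin d)) :
    ∃ p, IsMinOn (fun x => 1/(2*δ) * ‖x - δ • w‖^2 + J x) Set.univ p := by
  obtain ⟨A, C, hC, hAC⟩ := convex_affine_lower J hconv hJc
  set f : EuclideanSpace ℝ (Fin d) → ℝ := fun x => 1/(2*δ) * ‖x - δ • w‖^2 + J x with hf
  have hfc : Continuous f := by
    apply Continuous.add _ hJc
    exact (continuous_const.mul (((continuous_id.sub continuous_const).norm).pow 2))
  set b : ℝ := ‖w‖ + C with hb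
  set g : ℝ → ℝ := fun r => 1/(2*δ) * (r - δ*b)^2 + (A - δ*b^2/2) with hg
  have hgt : Filter.Tendsto g Filter.atTop Filter.atTop := by
    apply Filter.tendsto_atTop_add_const_right
    apply Filter.Tendsto.const_mul_atTop (by positivity)
    exact (Filter.tendsto_pow_atTop (two_ne_zero)).comp
      (Filter.tendsto_atTop_add_const_right _ _ Filter.tendsto_id)
  have hlow : ∀ x, g ‖x‖ ≤ f x := by
    intro x
    have h1 : ‖x‖ - δ * ‖w‖ ≤ ‖x - δ • w‖ := by
      have := norm_sub_norm_le x (δ • w)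
      rwa [norm_smul, Real.norm_eq_abs, abs_of_pos hδ] at this
    have habs : |‖x‖ - ‖δ • w‖| ≤ ‖x - δ • w‖ := abs_norm_sub_norm_le x (δ • w)
    have hnsm : ‖δ • w‖ = δ * ‖w‖ := by
      rw [norm_smul, Real.norm_eq_abs, abs_of_pos hδ]
    rw [hnsm] at habs
    have h2 : (‖x‖ - δ * ‖w‖)^2 ≤ ‖x - δ • w‖^2 := by
      nlinarith [sq_abs (‖x‖ - δ*‖w‖), abs_nonneg (‖x‖ - δ*‖w‖), norm_nonneg (x - δ • w)]
    have h3 : A - C * ‖x‖ ≤ J x := hAC x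
    have hδ' : (0:ℝ) < 1/(2*δ) := by positivity
    have e : ∀ c:ℝ, 1/(2*δ)*(‖x‖-δ*c)^2 = 1/(2*δ)*‖x‖^2 - c*‖x‖ + δ*c^2/2 := by
      intro c; field_simp; ring
    have h2' := mul_le_mul_of_nonneg_left h2 hδ'.le
    rw [e ‖w‖] at h2'
    simp only [hg, hf, hb]
    rw [e (‖w‖+C)]
    nlinarith [mul_nonneg hδ.le (sq_nonneg ‖w‖)]
  have hcoer : Filter.Tendsto f (Filter.cocompact _) Filter.atTop :=
    Filter.tendsto_atTop_mono hlow (hgt.comp tendsto_norm_cocompact_atTop)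
  obtain ⟨p, hp⟩ := hfc.exists_forall_le hcoer
  exact ⟨p, fun y _ => hp y⟩

/-- Lemma on full linearized Bregman steps: under relative `L`-smoothness
and the generalized PL condition, one linearized Bregman step with step size
`0 < τ < 1/L` satisfies `F(θ_τ⁺) - F* ≤ (1 - ηλ(τ)/τ)(F(θ) - F*)`. -/
theorem linBreg_full_step_linear_decrease {d : ℕ}
    (J F : EuclideanSpace ℝ (Fin d) → ℝ)
    (gradF : EuclideanSpace ℝ (Fin d) → EuclideanSpace ℝ (Fin d))
    (δ L η Fstar : ℝ) (lamfun : ℝ → ℝ)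
    (hδ : 0 < δ) (hL : 0 < L) (hη : 0 < η) (hlamfun : ∀ t, 0 < t → 0 < lamfun t)
    (hconv : ConvexOn ℝ Set.univ J) (hlsc : LowerSemicontinuous J)
    (hgrad : ∀ x, HasGradientAt F (gradF x) x)
    (hFstar : IsGLB (Set.range F) Fstar) :
    let Jδ : EuclideanSpace ℝ (Fin d) → ℝ := fun x => 1/(2*δ) * ‖x‖^2 + J x
    let Sub : EuclideanSpace ℝ (Fin d) → EuclideanSpace ℝ (Fin d) → Prop :=
      fun θ v => ∀ x, Jδ θ + ⟪v, x - θ⟫ ≤ Jδ x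
    let ProxMin : EuclideanSpace ℝ (Fin d) → EuclideanSpace ℝ (Fin d) → Prop :=
      fun w p => IsMinOn (fun x => 1/(2*δ) * ‖x - δ • w‖^2 + J x) Set.univ p
    -- `F` is `L`-smooth relative to `J_δ`:
    (∀ θ' θ v, Sub θ v →
        F θ' ≤ F θ + ⟪gradF θ, θ' - θ⟫ + L * (Jδ θ' - Jδ θ - ⟪v, θ' - θ⟫)) →
    -- scaling assumption:
    (∀ θ v, Sub θ v → ∀ τ, 0 < τ → ∀ θτ θ1, ProxMin (v - τ • gradF θ) θτ →
        ProxMin (v - gradF θ) θ1 →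
        Jδ θ - Jδ θτ - ⟪v - τ • gradF θ, θ - θτ⟫ ≥
          lamfun τ * (Jδ θ - Jδ θ1 - ⟪v - gradF θ, θ - θ1⟫)) →
    -- Bregman PL inequality:
    (∀ θ v, Sub θ v → ∀ θ1, ProxMin (v - gradF θ) θ1 →
        Jδ θ - Jδ θ1 - ⟪v - gradF θ, θ - θ1⟫ ≥ η * (F θ - Fstar)) →
    -- conclusion:
    ∀ θ v, Sub θ v → ∀ τ, 0 < τ → τ < 1/L → ∀ θτ, ProxMin (v - τ • gradF θ) θτ →
      F θτ - Fstar ≤ (1 - η * lamfun τ / τ) * (F θ - Fstar) := by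
  
  intro Jδ Sub ProxMin hsmooth hscale hPL θ v hv τ hτ hτL θτ hθτ
  have hJc : Continuous J := by
    exact continuousOn_univ.mp (hconv.continuousOn isOpen_univ)
  obtain ⟨θ1, hθ1⟩ := exists_prox J δ hδ hconv hJc (v - gradF θ)
  set D : ℝ := Jδ θτ - Jδ θ - ⟪v, θτ - θ⟫ with hD
  set Dτ : ℝ := Jδ θ - Jδ θτ - ⟪v - τ • gradF θ, θ - θτ⟫ with hDτ
  set D1 : ℝ := Jδ θ - Jδ θ1 - ⟪v - gradF θ, θ - θ1⟫ with hD1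
  have hD0 : 0 ≤ D := by
    have := hv θτ
    simp only [hD]; linarith
  have hsum : D + Dτ = -(τ * ⟪gradF θ, θτ - θ⟫) := by
    simp only [hD, hDτ, inner_sub_left, inner_sub_right, real_inner_smul_left]
    ring
  have hs := hsmooth θτ θ v hv
  rw [← hD] at hs
  have hsc := hscale θ v hv τ hτ θτ θ1 hθτ hθ1
  rw [← hDτ, ← hD1] at hsc
  have hpl := hPL θ v hv θ1 hθ1
  rw [← hD1] at hpl
  have hFθ : Fstar ≤ F θ := hFstar.1 ⟨θ, rfl⟩
  have hlam : 0 < lamfun τ := hlamfun τ hτ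
  have hτL' : τ * L ≤ 1 := by
    have := (lt_div_iff₀ hL).mp hτL
    linarith
  have hDτ' : lamfun τ * (η * (F θ - Fstar)) ≤ Dτ := by
    have h1 : lamfun τ * (η * (F θ - Fstar)) ≤ lamfun τ * D1 :=
      mul_le_mul_of_nonneg_left hpl hlam.le
    linarith [hsc]
  have key : τ * F θτ ≤ τ * F θ - lamfun τ * (η * (F θ - Fstar)) := by
    have hmul := mul_le_mul_of_nonneg_left hs hτ.le
    have hLD : τ * (L * D) ≤ D := by nlinarith
    nlinarith [hsum]
  have heq : (1 - η * lamfun τ / τ) * (F θ - Fstar)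
      = (τ * (F θ - Fstar) - η * lamfun τ * (F θ - Fstar)) / τ := by
    field_simp
  rw [heq, le_div_iff₀ hτ]
  nlinarith [key]
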